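/- With L(j,t) as defined above, L(j,0) = 1 for all integers j ≥ 0. -/

import Mathlib

/-- `Λ_j = λ₁ + ⋯ + λ_j`. -/
def Lam (lam : ℕ → ℕ) (j : ℕ) : ℕ := ∑ i ∈ Finset.Icc 1 j, lam i

/-- `L(j,0) = 1` for all `j ≥ 0`. -/
theorem stmt10 (k : ℕ) (lam : ℕ → ℕ) (hk : 1 ≤ k)
    (h1 : 1 ≤ lam 1) (hkpos : 1 ≤ lam k) (hzero : ∀ i, k < i → lam i = 0)
    (hΛ : 2 ≤ Lam lam k)
    (a : ℤ → ℚ)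
    (ha0 : ∀ i : ℤ, i ≤ 0 → a i = 1)
    (harec : ∀ n : ℤ, 1 ≤ n → a n = ∑ i ∈ Finset.Icc 1 k, (lam i : ℚ) * a (n - i))
    (L : ℕ → ℕ → ℚ)
    (hLjj : ∀ j : ℕ, L j j = (a (j + 1) - a j) / ((Lam lam k : ℚ) - 1))
    (hLrec : ∀ j t : ℕ, t < j →
      L j t = L j (t + 1) -
        ((Lam lam (j - t) : ℚ) - 1) * (a (t + 1) - a t) / ((Lam lam k : ℚ) - 1)) :
    ∀ j : ℕ, L j 0 = 1 := by
  set Λq : ℚ := (Lam lam k : ℚ) with hΛqdef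
  have hΛq2 : (2 : ℚ) ≤ Λq := by rw [hΛqdef]; exact_mod_cast hΛ
  have hΛqne : Λq - 1 ≠ 0 := by intro h; nlinarith
  -- extended recurrence: can sum up to any m ≥ k
  have harec' : ∀ n : ℤ, 1 ≤ n → ∀ m : ℕ, k ≤ m →
      a n = ∑ i ∈ Finset.Ioc 0 m, (lam i : ℚ) * a (n - i) := by
    intro n hn m hm
    rw [harec n hn, ← Finset.Icc_add_one_left_eq_Ioc]
    show ∑ i ∈ Finset.Icc 1 k, (lam i : ℚ) * a (n - i) = ∑ i ∈ Finset.Icc 1 m, (lam i : ℚ) * a (n - i)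
    apply Finset.sum_subset
    · exact Finset.Icc_subset_Icc_right hm
    · intro i hi hni
      have h1i : 1 ≤ i := (Finset.mem_Icc.mp hi).1
      have : k < i := by
        by_contra h
        exact hni (Finset.mem_Icc.mpr ⟨h1i, le_of_not_gt h⟩)
      simp [hzero i this]
  -- the key telescoping identity
  have key : ∀ j : ℕ, ∑ s ∈ Finset.range j,
      ((Lam lam (j - s) : ℚ) - 1) * (a (s + 1) - a s) = a (j + 1) - a j - (Λq - 1) := by
    intro j
    induction j with
    | zero =>
      have h0 : a (0 : ℤ) = 1 := ha0 0 le_rfl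
      have h1' : a (1 : ℤ) = Λq := by
        rw [harec 1 le_rfl]
        rw [hΛqdef, Lam, Nat.cast_sum]
        apply Finset.sum_congr rfl
        intro i hi
        have h1i : 1 ≤ i := (Finset.mem_Icc.mp hi).1
        have : (1 : ℤ) - i ≤ 0 := by omega
        rw [ha0 _ this, mul_one]
      simp [h0, h1']
    | succ j ih =>
      have hstep : ∀ s ∈ Finset.range (j + 1),
          ((Lam lam (j + 1 - s) : ℚ) - 1) * (a (s + 1) - a s) =
          ((Lam lam (j - s) : ℚ) - 1) * (a (s + 1) - a s) +
            (lam (j + 1 - s) : ℚ) * (a (s + 1) - a s) := by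
        intro s hs
        have hsj : s ≤ j := Nat.lt_succ_iff.mp (Finset.mem_range.mp hs)
        have h1 : j + 1 - s = (j - s) + 1 := by omega
        have h2 : Lam lam ((j - s) + 1) = Lam lam (j - s) + lam ((j - s) + 1) :=
          Finset.sum_Icc_succ_top (by omega) lam
        rw [h1, h2]
        push_cast
        ring
      rw [Finset.sum_congr rfl hstep, Finset.sum_add_distrib]
      -- first sum
      have hA : ∑ s ∈ Finset.range (j + 1), ((Lam lam (j - s) : ℚ) - 1) * (a (s + 1) - a s)
          = (a (j + 1) - a j - (Λq - 1)) - (a (j + 1) - a j) := by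
        rw [Finset.sum_range_succ, ih]
        have : Lam lam (j - j) = 0 := by simp [Lam]
        rw [this]
        push_cast
        ring
      rw [hA]
      -- second sum: reindex i = j + 1 - s
      have hB : ∑ s ∈ Finset.range (j + 1), (lam (j + 1 - s) : ℚ) * (a (s + 1) - a s)
          = ∑ i ∈ Finset.Ioc 0 (j + 1), (lam i : ℚ) * (a (j + 2 - i) - a (j + 1 - i)) := by
        apply Finset.sum_nbij' (fun s => j + 1 - s) (fun i => j + 1 - i)
        · intro s hs
          simp only [Finset.mem_range] at hs
          simp only [Finset.mem_Ioc]
          omega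
        · intro i hi
          simp only [Finset.mem_Ioc] at hi
          simp only [Finset.mem_range]
          omega
        · intro s hs
          simp only [Finset.mem_range] at hs
          omega
        · intro i hi
          simp only [Finset.mem_Ioc] at hi
          omega
        · intro s hs
          simp only [Finset.mem_range] at hs
          congr 2
          · push_cast [Nat.cast_sub (by omega : s ≤ j + 1)]
            ring_nf
          · push_cast [Nat.cast_sub (by omega : s ≤ j + 1)]
            ring_nf
      rw [hB]
      set M := max (j + 1) k with hM
      have hjM : j + 1 ≤ M := le_max_left _ _
      have hkM : k ≤ M := le_max_right _ _
      have hsplit : ∀ g : ℕ → ℚ,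
          ∑ i ∈ Finset.Ioc 0 (j + 1), g i = ∑ i ∈ Finset.Ioc 0 M, g i
            - ∑ i ∈ Finset.Ioc (j + 1) M, g i := by
        intro g
        rw [← Finset.sum_Ioc_consecutive g (Nat.zero_le (j + 1)) hjM]
        ring
      rw [hsplit]
      have htail : ∀ i ∈ Finset.Ioc (j + 1) M,
          (lam i : ℚ) * (a (j + 2 - i) - a (j + 1 - i)) = 0 := by
        intro i hi
        have hij : j + 1 < i := (Finset.mem_Ioc.mp hi).1
        have e1 : a ((j : ℤ) + 2 - i) = 1 := ha0 _ (by push_cast; omega)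
        have e2 : a ((j : ℤ) + 1 - i) = 1 := ha0 _ (by push_cast; omega)
        rw [e1, e2]; ring
      rw [Finset.sum_eq_zero htail, sub_zero]
      have hmain : ∑ i ∈ Finset.Ioc 0 M, (lam i : ℚ) * (a (j + 2 - i) - a (j + 1 - i))
          = a (j + 2) - a (j + 1) := by
        have e1 := harec' ((j : ℤ) + 2) (by omega) M hkM
        have e2 := harec' ((j : ℤ) + 1) (by omega) M hkM
        calc ∑ i ∈ Finset.Ioc 0 M, (lam i : ℚ) * (a (j + 2 - i) - a (j + 1 - i))
            = (∑ i ∈ Finset.Ioc 0 M, (lam i : ℚ) * a ((j : ℤ) + 2 - i))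
              - ∑ i ∈ Finset.Ioc 0 M, (lam i : ℚ) * a ((j : ℤ) + 1 - i) := by
              rw [← Finset.sum_sub_distrib]
              apply Finset.sum_congr rfl
              intro i _
              ring
          _ = a ((j : ℤ) + 2) - a ((j : ℤ) + 1) := by rw [← e1, ← e2]
      rw [hmain]
      push_cast
      ring
  -- closed form for L
  have hclosed : ∀ d t : ℕ, L (t + d) t =
      (a (t + d + 1) - a (t + d) - ∑ s ∈ Finset.Ico t (t + d),
        ((Lam lam (t + d - s) : ℚ) - 1) * (a (s + 1) - a s)) / (Λq - 1) := by
    intro d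
    induction d with
    | zero =>
      intro t
      simp [hLjj t]
    | succ d ih =>
      intro t
      have htlt : t < t + (d + 1) := by omega
      rw [hLrec _ _ htlt]
      have h1 : t + (d + 1) = (t + 1) + d := by omega
      have h2 : L (t + (d + 1)) (t + 1) = (a (t + (d + 1) + 1) - a (t + (d + 1))
          - ∑ s ∈ Finset.Ico (t + 1) (t + (d + 1)),
            ((Lam lam (t + (d + 1) - s) : ℚ) - 1) * (a (s + 1) - a s)) / (Λq - 1) := by
        rw [h1] at htlt ⊢
        have := ih (t + 1)
        convert this using 4 <;> push_cast <;> ring_nf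
      rw [h2]
      rw [Finset.sum_eq_sum_Ico_succ_bot htlt]
      field_simp
      push_cast
      ring
  intro j
  have := hclosed j 0
  simp only [Nat.zero_add, zero_add] at this
  rw [this]
  rw [← Finset.range_eq_Ico, key j]
  field_simp
  simp only [Nat.cast_zero, zero_add]
  ring
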